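/- arXiv:1606.04366 — 3 statements merged into one kernel-verified Lean document; each statement's English description precedes it below -/
import Mathlib

section
/- Fix α ≥ 0, β > 0, g ∈ ℝ, w ≥ 0 with w² < β and αβ ≥ g². The function J(r) = √(α + β r² − 2|g| r) + w r on r ≥ 0 is minimized by r = 0 if and only if α w² ≥ g². -/
/-- Zero is a minimizer of J(r) = √(α + βr² − 2|g|r) + wr on r ≥ 0
iff the soft-thresholding condition α w² ≥ g² holds. -/
theorem zero_minimizer_iff_threshold
    (α β g w : ℝ) (hα : 0 ≤ α) (hβ : 0 < β) (hw : 0 ≤ w)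
    (hwβ : w ^ 2 < β) (hdisc : g ^ 2 ≤ α * β) :
    IsMinOn (fun r => Real.sqrt (α + β * r ^ 2 - 2 * |g| * r) + w * r)
        (Set.Ici (0 : ℝ)) 0
      ↔ g ^ 2 ≤ α * w ^ 2 := by
  have hsa : Real.sqrt α ^ 2 = α := Real.sq_sqrt hα
  have hsa0 : 0 ≤ Real.sqrt α := Real.sqrt_nonneg α
  have hf0 : Real.sqrt (α + β * (0:ℝ) ^ 2 - 2 * |g| * 0) + w * 0 = Real.sqrt α := by
    norm_num
  constructor
  · intro hmin
    by_contra h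
    push_neg at h
    have hα0 : 0 < α := by
      rcases hα.lt_or_eq with h' | h'
      · exact h'
      · exfalso; nlinarith [sq_nonneg g, sq_nonneg w]
    have hsa0' : 0 < Real.sqrt α := Real.sqrt_pos.mpr hα0
    have hg : w * Real.sqrt α < |g| := by
      nlinarith [abs_nonneg g, sq_abs g, mul_nonneg hw hsa0]
    set r := (|g| - w * Real.sqrt α) / β with hrdef
    have hr0 : 0 < r := div_pos (by linarith) hβ
    have hbr : β * r = |g| - w * Real.sqrt α := by
      rw [hrdef]; field_simp [hβ.ne']
    have h1 : (w * |g|) ^ 2 ≤ w ^ 2 * α * β := by nlinarith [sq_abs g, sq_nonneg w]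
    have hX : 0 < (β + w ^ 2) * Real.sqrt α := by positivity
    have hXsq : ((β + w ^ 2) * Real.sqrt α) ^ 2 = (β + w ^ 2) ^ 2 * α := by
      rw [mul_pow, hsa]
    have h2sq : (w * |g|) ^ 2 < ((β + w ^ 2) * Real.sqrt α) ^ 2 := by
      rw [hXsq]
      nlinarith [mul_pos hα0 (mul_pos hβ hβ),
        mul_nonneg (mul_nonneg hα0.le hβ.le) (sq_nonneg w),
        mul_nonneg hα0.le (sq_nonneg (w ^ 2))]
    have h2 : w * |g| < (β + w ^ 2) * Real.sqrt α :=
      lt_of_pow_lt_pow_left₀ 2 hX.le h2sq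
    have hc : 0 < Real.sqrt α - w * r := by nlinarith [h2, hbr]
    have key : α + β * r ^ 2 - 2 * |g| * r < (Real.sqrt α - w * r) ^ 2 := by
      nlinarith [mul_pos hr0 hr0, sq_nonneg w, mul_pos (mul_pos hr0 hr0) hβ]
    have hlt : Real.sqrt (α + β * r ^ 2 - 2 * |g| * r) < Real.sqrt α - w * r := by
      exact (Real.sqrt_lt' hc).mpr key
    have hmem : r ∈ Set.Ici (0:ℝ) := hr0.le
    have := hmin hmem
    simp only [Set.mem_setOf_eq, hf0] at this
    linarith
  · intro h
    rw [isMinOn_iff]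
    intro r hr
    simp only [Set.mem_Ici] at hr
    simp only [hf0]
    have hga : |g| ≤ w * Real.sqrt α := by
      nlinarith [sq_abs g, abs_nonneg g, mul_nonneg hw hsa0]
    by_cases hcase : Real.sqrt α ≤ w * r
    · have := Real.sqrt_nonneg (α + β * r ^ 2 - 2 * |g| * r)
      linarith
    · push_neg at hcase
      have h0 : 0 ≤ Real.sqrt α - w * r := by linarith
      have key : (Real.sqrt α - w * r) ^ 2 ≤ α + β * r ^ 2 - 2 * |g| * r := by
        nlinarith [mul_nonneg hr hr, mul_nonneg hr (sub_nonneg.mpr hga)]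
      have := Real.sqrt_le_sqrt key
      rw [Real.sqrt_sq h0] at this
      linarith
end

section
/- Fix α ≥ 0, β > 0, g ∈ ℝ, w ≥ 0 with w² < β, αβ ≥ g², and α w² < g². Then the unique minimizer over r ≥ 0 of J(r) = √(α + β r² − 2|g| r) + w r is r̂ = |g|/β − (w/(β√(β − w²)))·√(αβ − g²), and r̂ > 0. -/
/-- Closed-form unique positive minimizer of J(r) = √(α + βr² − 2|g|r) + wr
on r ≥ 0 when the soft-thresholding condition fails. -/
theorem closed_form_minimizer
    (α β g w : ℝ) (hα : 0 ≤ α) (hβ : 0 < β) (hw : 0 ≤ w)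
    (hwβ : w ^ 2 < β) (hdisc : g ^ 2 ≤ α * β) (hthr : α * w ^ 2 < g ^ 2)
    (rhat : ℝ)
    (hr : rhat = |g| / β - (w / (β * Real.sqrt (β - w ^ 2))) * Real.sqrt (α * β - g ^ 2)) :
    0 < rhat ∧
      IsMinOn (fun r => Real.sqrt (α + β * r ^ 2 - 2 * |g| * r) + w * r)
        (Set.Ici (0 : ℝ)) rhat ∧
      ∀ r ∈ Set.Ici (0 : ℝ),
        IsMinOn (fun r => Real.sqrt (α + β * r ^ 2 - 2 * |g| * r) + w * r)
          (Set.Ici (0 : ℝ)) r → r = rhat := by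
  have hg : |g| ^ 2 = g ^ 2 := sq_abs g
  set t := Real.sqrt (β - w ^ 2) with htdef
  have ht0 : 0 < t := Real.sqrt_pos.mpr (by linarith)
  have ht2 : t ^ 2 = β - w ^ 2 := Real.sq_sqrt (by linarith)
  set sD := Real.sqrt (α * β - g ^ 2) with hsDdef
  have hsD0 : 0 ≤ sD := Real.sqrt_nonneg _
  have hsD2 : sD ^ 2 = α * β - g ^ 2 := Real.sq_sqrt (by linarith)
  set c := sD / t with hcdef
  have hc0 : 0 ≤ c := div_nonneg hsD0 ht0.le
  have h1 : β * rhat = |g| - w * c := by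
    rw [hr, hcdef]; field_simp
  have h2 : (β - w ^ 2) * c ^ 2 = α * β - g ^ 2 := by
    rw [hcdef, div_pow, ht2, hsD2]
    rw [mul_comm]
    exact div_mul_cancel₀ _ (ne_of_gt (by linarith : (0:ℝ) < β - w ^ 2))
  clear_value t sD c
  -- positivity of rhat
  have hwc : w * c < |g| := by
    apply lt_of_pow_lt_pow_left₀ 2 (abs_nonneg g)
    rw [hg]
    nlinarith [sq_nonneg (w * c), h2]
  have hpos : 0 < rhat := by
    have : 0 < β * rhat := by rw [h1]; linarith
    nlinarith
  -- the key algebraic identity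
  have hiden : ∀ r : ℝ, α + β * r ^ 2 - 2 * |g| * r
      = (c - w * (r - rhat)) ^ 2 + (β - w ^ 2) * (r - rhat) ^ 2 := by
    intro r
    have hβ' : β ≠ 0 := ne_of_gt hβ
    apply mul_left_cancel₀ hβ'
    linear_combination (2 * β * r - β * rhat - (w * c + |g|)) * h1 - h2 - hg
  have hJhat : Real.sqrt (α + β * rhat ^ 2 - 2 * |g| * rhat) = c := by
    rw [hiden rhat]
    simp
    exact Real.sqrt_sq hc0
  -- strict inequality off rhat
  have hge : ∀ r : ℝ, r ≠ rhat →
      c + w * rhat < Real.sqrt (α + β * r ^ 2 - 2 * |g| * r) + w * r := by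
    intro r hne
    have hs : (r - rhat) ^ 2 > 0 := by
      rcases (sub_ne_zero.mpr hne).lt_or_gt with h | h <;> nlinarith
    have hlt : (c - w * (r - rhat)) ^ 2 < α + β * r ^ 2 - 2 * |g| * r := by
      rw [hiden r]; nlinarith
    have h3 : |c - w * (r - rhat)| < Real.sqrt (α + β * r ^ 2 - 2 * |g| * r) := by
      calc |c - w * (r - rhat)| = Real.sqrt ((c - w * (r - rhat)) ^ 2) :=
            (Real.sqrt_sq_eq_abs _).symm
        _ < _ := Real.sqrt_lt_sqrt (sq_nonneg _) hlt
    have h4 : c - w * (r - rhat) ≤ |c - w * (r - rhat)| := le_abs_self _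
    linarith
  refine ⟨hpos, ?_, ?_⟩
  · rw [isMinOn_iff]
    intro r _
    show Real.sqrt (α + β * rhat ^ 2 - 2 * |g| * rhat) + w * rhat ≤
      Real.sqrt (α + β * r ^ 2 - 2 * |g| * r) + w * r
    rw [hJhat]
    rcases eq_or_ne r rhat with rfl | hne
    · rw [hJhat]
    · exact (hge r hne).le
  · intro r hr0 hminr
    by_contra hne
    have hle : Real.sqrt (α + β * r ^ 2 - 2 * |g| * r) + w * r ≤
        Real.sqrt (α + β * rhat ^ 2 - 2 * |g| * rhat) + w * rhat :=
      isMinOn_iff.mp hminr rhat (Set.mem_Ici.mpr hpos.le)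
    rw [hJhat] at hle
    exact absurd hle (not_le.mpr (hge r hne))
end

section
/- Define c_i^{(k)} = (σ_i^{(0)})^{1/2^k} for σ_i^{(0)} > 0. Suppose two sequences of covariance parameters satisfy D_i^{(k)} = c_i^{(k)} D̄_i^{(k)} and σ_i^{(k)} = c_i^{(k)} σ̄_i^{(k)}, and the update rules d_{i,j}^{(k+1)} = |z_{i,j}|/√(γⱼᵀ Σ̃ᵢ⁻¹ γⱼ) and σ_i^{(k+1)} = aᵢ/√(tr(Σ̃ᵢ⁻¹)) with Σ̃ᵢ = Γ D_i^{(k)} Γᵀ + σ_i^{(k)} I (and analogously with bars, sharing the same z_{i,j} and aᵢ). Then D_i^{(k+1)} = c_i^{(k+1)} D̄_i^{(k+1)} and σ_i^{(k+1)} = c_i^{(k+1)} σ̄_i^{(k+1)}; consequently c_i^{(k)} → 1 and the two covariance sequences converge to the same limit point. -/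
open Matrix Filter

lemma cov_inv_sqrt_div_aux {u x y : ℝ} (hu : 0 ≤ u) (hx : 0 ≤ x) :
    y / Real.sqrt (u⁻¹ * x) = Real.sqrt u * (y / Real.sqrt x) := by
  rw [Real.sqrt_mul (inv_nonneg.mpr hu), Real.sqrt_inv]
  simp [div_eq_mul_inv, mul_inv, inv_inv, mul_comm, mul_assoc, mul_left_comm]

/-- Induction step of the initialization-invariance theorem: if two covariance
parameter sequences differ by the factor c^(k) = (σ⁰)^(1/2ᵏ), then after one
update they differ by c^(k+1); consequently c^(k) → 1. -/
theorem covariance_invariance_induction_step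
    (N q : ℕ) (Γ : Matrix (Fin q) (Fin N) ℝ)
    (σ0 : ℝ) (hσ0 : 0 < σ0)
    (c : ℕ → ℝ) (hcdef : ∀ k, c k = σ0 ^ ((1 : ℝ) / 2 ^ k))
    (k : ℕ)
    (D Dbar : Fin q → ℝ) (hDbar : ∀ j, 0 ≤ Dbar j)
    (σ σbar : ℝ) (hσbar : 0 < σbar)
    (hD : D = fun j => c k * Dbar j) (hσ : σ = c k * σbar)
    (z : Fin q → ℝ) (a : ℝ) (ha : 0 ≤ a)
    (Sig Sigbar : Matrix (Fin N) (Fin N) ℝ)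
    (hSig : Sig = Γᵀ * Matrix.diagonal D * Γ + σ • (1 : Matrix (Fin N) (Fin N) ℝ))
    (hSigbar : Sigbar = Γᵀ * Matrix.diagonal Dbar * Γ + σbar • (1 : Matrix (Fin N) (Fin N) ℝ))
    (D' Dbar' : Fin q → ℝ) (σ' σbar' : ℝ)
    (hD' : D' = fun j => |z j| / Real.sqrt ((fun n => Γ j n) ⬝ᵥ (Sig⁻¹ *ᵥ fun n => Γ j n)))
    (hDbar' : Dbar' = fun j =>
      |z j| / Real.sqrt ((fun n => Γ j n) ⬝ᵥ (Sigbar⁻¹ *ᵥ fun n => Γ j n)))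
    (hσ' : σ' = a / Real.sqrt Sig⁻¹.trace)
    (hσbar' : σbar' = a / Real.sqrt Sigbar⁻¹.trace) :
    (D' = fun j => c (k + 1) * Dbar' j) ∧ σ' = c (k + 1) * σbar' ∧
      Tendsto c atTop (nhds 1) := by
  have hc0 : ∀ m, 0 < c m := fun m => by
    rw [hcdef]; exact Real.rpow_pos_of_pos hσ0 _
  -- c (k+1) = √(c k)
  have hck1 : c (k + 1) = Real.sqrt (c k) := by
    rw [hcdef, hcdef, Real.sqrt_eq_rpow, ← Real.rpow_mul hσ0.le]
    congr 1
    rw [pow_succ]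
    ring
  -- Sigbar is positive definite
  have hΓH : (Γᵀ)ᴴ = Γ := by
    ext i j; simp [Matrix.conjTranspose_apply]
  have hPSD : (Γᵀ * Matrix.diagonal Dbar * Γ).PosSemidef := by
    have := (Matrix.posSemidef_diagonal_iff.mpr hDbar).mul_mul_conjTranspose_same Γᵀ
    rwa [hΓH] at this
  have hPD : Sigbar.PosDef := by
    rw [hSigbar]
    refine Matrix.PosDef.posSemidef_add hPSD ?_
    rw [Matrix.smul_one_eq_diagonal]
    exact Matrix.posDef_diagonal_iff.mpr fun _ => hσbar
  have hPDinv : Sigbar⁻¹.PosDef := hPD.inv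
  -- Sig = c k • Sigbar
  have hscale : Sig = c k • Sigbar := by
    rw [hSig, hSigbar, hD, hσ]
    have hdiag : Matrix.diagonal (fun j => c k * Dbar j) =
        c k • Matrix.diagonal Dbar := by
      rw [← Matrix.diagonal_smul]; rfl
    rw [hdiag, smul_add, Matrix.mul_smul, Matrix.smul_mul, smul_smul]
  -- inverse scaling
  have hinv : Sig⁻¹ = (c k)⁻¹ • Sigbar⁻¹ := by
    have hdet : IsUnit Sigbar.det := isUnit_iff_ne_zero.mpr hPD.det_pos.ne'
    have : Invertible (c k) := invertibleOfNonzero (hc0 k).ne'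
    have h2 : (c k • Sigbar)⁻¹ = ⅟(c k) • Sigbar⁻¹ := Matrix.inv_smul Sigbar (c k) hdet
    rw [hscale, h2, invOf_eq_inv]
  refine ⟨?_, ?_, ?_⟩
  · funext j
    rw [hD', hDbar', hinv, hck1]
    have hx : 0 ≤ (fun n => Γ j n) ⬝ᵥ (Sigbar⁻¹ *ᵥ fun n => Γ j n) := by
      have := hPDinv.posSemidef.dotProduct_mulVec_nonneg (fun n => Γ j n)
      simpa using this
    simp only [Matrix.smul_mulVec, dotProduct_smul, smul_eq_mul]
    exact cov_inv_sqrt_div_aux (hc0 k).le hx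
  · rw [hσ', hσbar', hinv, hck1, Matrix.trace_smul, smul_eq_mul]
    have ht : 0 ≤ Sigbar⁻¹.trace := by
      rw [Matrix.trace]
      exact Finset.sum_nonneg fun i _ => by
        have := hPDinv.posSemidef.dotProduct_mulVec_nonneg (Pi.single i 1)
        simpa using this
    exact cov_inv_sqrt_div_aux (hc0 k).le ht
  · have h1 : Tendsto (fun m : ℕ => (1 : ℝ) / 2 ^ m) atTop (nhds 0) := by
      simpa [one_div, inv_pow] using
        tendsto_pow_atTop_nhds_zero_of_lt_one (by norm_num : (0:ℝ) ≤ 2⁻¹)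
          (by norm_num : (2:ℝ)⁻¹ < 1)
    have h2 : Tendsto (fun x : ℝ => σ0 ^ x) (nhds 0) (nhds 1) := by
      have := (Real.continuousAt_const_rpow (b := (0:ℝ)) hσ0.ne').tendsto
      simpa [Real.rpow_zero] using this
    have := h2.comp h1
    simp only [Function.comp_def] at this
    convert this using 1
    funext m
    exact hcdef m
end
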